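/- Let P, Q be orthogonal projections in generic position on H and set A = P - Q. Then the range of 1 - A² is closed if and only if P + Q - 1 is invertible in B(H). -/

import Mathlib

open ContinuousLinearMap

variable {H : Type*} [NormedAddCommGroup H] [InnerProductSpace ℂ H] [CompleteSpace H]

/-- An orthogonal projection: a selfadjoint idempotent bounded operator. -/
def IsOrthogonalProjection (P : H →L[ℂ] H) : Prop :=
  IsSelfAdjoint P ∧ P * P = P

/-- A symmetry: a selfadjoint unitary operator. -/
def IsSymmetry (V : H →L[ℂ] H) : Prop :=
  IsSelfAdjoint V ∧ V * V = 1

/-- Two orthogonal projections are in generic position if the four canonical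
intersections of their ranges and kernels are trivial. -/
def GenericPosition (P Q : H →L[ℂ] H) : Prop :=
  LinearMap.range (P : H →ₗ[ℂ] H) ⊓ LinearMap.range (Q : H →ₗ[ℂ] H) = ⊥ ∧
  LinearMap.range (P : H →ₗ[ℂ] H) ⊓ LinearMap.ker (Q : H →ₗ[ℂ] H) = ⊥ ∧
  LinearMap.ker (P : H →ₗ[ℂ] H) ⊓ LinearMap.range (Q : H →ₗ[ℂ] H) = ⊥ ∧
  LinearMap.ker (P : H →ₗ[ℂ] H) ⊓ LinearMap.ker (Q : H →ₗ[ℂ] H) = ⊥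


theorem sa_orth_range (T : H →L[ℂ] H) (hT : IsSelfAdjoint T) :
    (LinearMap.range (T : H →ₗ[ℂ] H))ᗮ = LinearMap.ker (T : H →ₗ[ℂ] H) := by
  have hs : ∀ a b : H, inner ℂ (T a) b = (inner ℂ a (T b) : ℂ) := fun a b => hT.isSymmetric a b
  ext x
  simp only [Submodule.mem_orthogonal, LinearMap.mem_range, LinearMap.mem_ker,
    forall_exists_index]
  constructor
  · intro h
    have h2 : ∀ y, inner ℂ (T x) y = (0 : ℂ) := fun y => by
      rw [hs x y, ← inner_conj_symm, h (T y) y rfl, map_zero]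
    have := h2 (T x)
    rwa [inner_self_eq_zero] at this
  · intro h u y hy
    simp only [ContinuousLinearMap.coe_coe] at h hy ⊢
    rw [← hy, hs y x, h, inner_zero_right]

/-- For projections `P, Q` in generic position with `A = P - Q`, the range of
`1 - A²` is closed iff `P + Q - 1` is invertible in `B(H)`. -/
theorem closed_range_iff_sum_invertible (P Q : H →L[ℂ] H)
    (hP : IsOrthogonalProjection P) (hQ : IsOrthogonalProjection Q)
    (hgen : GenericPosition P Q) :
    IsClosed (LinearMap.range ((1 - (P - Q) * (P - Q) : H →L[ℂ] H) : H →ₗ[ℂ] H) : Set H) ↔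
      IsUnit (P + Q - 1) := by
  set B := P + Q - 1 with hBdef
  have key : 1 - (P - Q) * (P - Q) = B * B := by
    rw [hBdef]
    simp only [mul_sub, sub_mul, add_mul, mul_add, mul_one, one_mul, hP.2, hQ.2]
    abel
  have hB : IsSelfAdjoint B := (hP.1.add hQ.1).sub (IsSelfAdjoint.one _)
  have hBB : IsSelfAdjoint (B * B) := by
    rw [IsSelfAdjoint, star_mul, hB.star_eq]
  -- ker B = ⊥
  have hker : LinearMap.ker (B : H →ₗ[ℂ] H) = ⊥ := by
    rw [Submodule.eq_bot_iff]
    intro x hx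
    rw [LinearMap.mem_ker] at hx
    have hx' : P x + Q x = x := by
      have : (P + Q - 1) x = 0 := hx
      simp only [sub_apply, add_apply, ContinuousLinearMap.one_apply] at this
      linear_combination (norm := module) this
    have hPP : ∀ y, P (P y) = P y := fun y => by
      have := congrFun (congrArg DFunLike.coe hP.2) y; simpa using this
    have hQQ : ∀ y, Q (Q y) = Q y := fun y => by
      have := congrFun (congrArg DFunLike.coe hQ.2) y; simpa using this
    have hPQ : P (Q x) = 0 := by
      have := congrArg P hx'
      rw [map_add, hPP] at this
      linear_combination (norm := module) this
    have hQP : Q (P x) = 0 := by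
      have := congrArg Q hx'
      rw [map_add, hQQ] at this
      linear_combination (norm := module) this
    have hQx : Q x = 0 := by
      have : Q x ∈ LinearMap.ker (P : H →ₗ[ℂ] H) ⊓ LinearMap.range (Q : H →ₗ[ℂ] H) :=
        ⟨LinearMap.mem_ker.mpr hPQ, ⟨x, rfl⟩⟩
      rw [hgen.2.2.1] at this
      exact this
    have hPx : P x = 0 := by
      have : P x ∈ LinearMap.range (P : H →ₗ[ℂ] H) ⊓ LinearMap.ker (Q : H →ₗ[ℂ] H) :=
        ⟨⟨x, rfl⟩, LinearMap.mem_ker.mpr hQP⟩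
      rw [hgen.2.1] at this
      exact this
    rw [← hx', hPx, hQx, add_zero]
  have hkerBB : LinearMap.ker ((B * B : H →L[ℂ] H) : H →ₗ[ℂ] H) = ⊥ := by
    rw [Submodule.eq_bot_iff]
    intro x hx
    rw [LinearMap.mem_ker] at hx
    have hBx : B (B x) = 0 := hx
    have hs : ∀ a b : H, inner ℂ (B a) b = (inner ℂ a (B b) : ℂ) := fun a b => hB.isSymmetric a b
    have : inner ℂ (B x) (B x) = (0 : ℂ) := by
      rw [← hs (B x) x, hBx, inner_zero_left]
    have hBx0 : B x = 0 := inner_self_eq_zero.mp this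
    have : x ∈ LinearMap.ker (B : H →ₗ[ℂ] H) := LinearMap.mem_ker.mpr hBx0
    rw [hker] at this
    exact this
  rw [key]
  constructor
  · intro hC
    haveI : CompleteSpace (LinearMap.range ((B * B : H →L[ℂ] H) : H →ₗ[ℂ] H)) := hC.completeSpace_coe
    have hrange : LinearMap.range ((B * B : H →L[ℂ] H) : H →ₗ[ℂ] H) = ⊤ := by
      rw [← Submodule.orthogonal_eq_bot_iff, sa_orth_range _ hBB, hkerBB]
    have hBBunit : IsUnit (B * B) := by
      rw [isUnit_iff_bijective]
      exact ⟨LinearMap.ker_eq_bot.mp hkerBB, LinearMap.range_eq_top.mp hrange⟩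
    obtain ⟨u, hu⟩ := hBBunit
    have hiu : (↑u⁻¹ : H →L[ℂ] H) * (B * B) = 1 := by rw [← hu]; exact u.inv_mul
    have hui : (B * B) * (↑u⁻¹ : H →L[ℂ] H) = 1 := by rw [← hu]; exact u.mul_inv
    have h2 : B * (B * ↑u⁻¹) = 1 := by rw [← mul_assoc]; exact hui
    rw [isUnit_iff_bijective]
    refine ⟨LinearMap.ker_eq_bot.mp hker, fun y => ⟨(B * ↑u⁻¹) y, ?_⟩⟩
    have := congrFun (congrArg DFunLike.coe h2) y
    simpa using this
  · intro hBunit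
    have : IsUnit (B * B) := hBunit.mul hBunit
    have hsurj : Function.Surjective (B * B) := (isUnit_iff_bijective.mp this).2
    have : LinearMap.range ((B * B : H →L[ℂ] H) : H →ₗ[ℂ] H) = ⊤ := LinearMap.range_eq_top.mpr hsurj
    rw [this]
    exact isClosed_univ
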